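/- Let v : ℝ² → ℝ be a positive C³ function satisfying v·Δv = ‖∇v‖² + 1/2 at every point of ℝ², and set P := Δv. Then for every compactly supported C¹ function φ : ℝ² → ℝ one has ∫_{ℝ²} P·φ² dx ≤ 4·∫_{ℝ²} v·‖∇φ‖² dx, with integrals taken with respect to Lebesgue measure. -/

import Mathlib

open MeasureTheory Metric

/-- The Euclidean Laplacian: the trace of the Hessian. -/
noncomputable def lap {d : ℕ} (u : EuclideanSpace ℝ (Fin d) → ℝ)
    (x : EuclideanSpace ℝ (Fin d)) : ℝ :=
  ∑ i, iteratedFDeriv ℝ 2 u x ![EuclideanSpace.single i 1, EuclideanSpace.single i 1]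

section aux

local notation "E2" => EuclideanSpace ℝ (Fin 2)

noncomputable def ee (i : Fin 2) : EuclideanSpace ℝ (Fin 2) := EuclideanSpace.single i 1

lemma inner_grad (f : E2 → ℝ) (x y : E2) :
    @inner ℝ _ _ (gradient f x) y = fderiv ℝ f x y := by
  simp [gradient, InnerProductSpace.toDual_symm_apply]

lemma grad_coord (f : E2 → ℝ) (x : E2) (i : Fin 2) :
    gradient f x i = fderiv ℝ f x (ee i) := by
  rw [← inner_grad]
  simpa [ee] using (EuclideanSpace.inner_single_right (𝕜 := ℝ) i 1 (gradient f x)).symm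

lemma norm_grad_sq (f : E2 → ℝ) (x : E2) :
    ‖gradient f x‖ ^ 2 = ∑ i, (fderiv ℝ f x (ee i)) ^ 2 := by
  rw [← real_inner_self_eq_norm_sq, PiLp.inner_apply]
  simp [grad_coord, RCLike.inner_apply, sq]

lemma inner_grad_expand (f h : E2 → ℝ) (x : E2) :
    @inner ℝ _ _ (gradient f x) (gradient h x)
      = ∑ i, fderiv ℝ f x (ee i) * fderiv ℝ h x (ee i) := by
  rw [PiLp.inner_apply]
  simp [grad_coord, RCLike.inner_apply]
  ring

lemma lap_eq (u : E2 → ℝ) (x : E2) :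
    lap u x = ∑ i, fderiv ℝ (fderiv ℝ u) x (ee i) (ee i) := by
  unfold lap
  refine Finset.sum_congr rfl fun i _ => ?_
  rw [iteratedFDeriv_two_apply]
  simp [ee]

end aux

/-- The key integral estimate (6.2)–(6.3) in the proof of Theorem 1.2, Euclidean case:
if `v Δv = ‖∇v‖² + 1/2` with `v > 0` and `P := Δv`, then
`∫ P φ² ≤ 4 ∫ v ‖∇φ‖²` for every compactly supported C¹ function `φ`. -/
theorem stmt_19 (v : EuclideanSpace ℝ (Fin 2) → ℝ) (hv : ContDiff ℝ 3 v)
    (hvpos : ∀ x, 0 < v x)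
    (heq : ∀ x, v x * lap v x = ‖gradient v x‖ ^ 2 + 1 / 2)
    (P : EuclideanSpace ℝ (Fin 2) → ℝ) (hP : ∀ x, P x = lap v x) :
    ∀ φ : EuclideanSpace ℝ (Fin 2) → ℝ, ContDiff ℝ 1 φ → HasCompactSupport φ →
      (∫ x, P x * φ x ^ 2 ∂volume) ≤ 4 * ∫ x, v x * ‖gradient φ x‖ ^ 2 ∂volume := by
  intro φ hφ hsupp
  -- abbreviations
  set g : EuclideanSpace ℝ (Fin 2) → ℝ := fun x => φ x * φ x with hgdef
  have hg1 : ContDiff ℝ 1 g := hφ.mul hφ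
  have hgsupp : HasCompactSupport g := hsupp.mul_left
  obtain ⟨D, hgLip⟩ := ContDiff.lipschitzWith_of_hasCompactSupport hgsupp hg1 one_ne_zero
  -- differentiability facts
  have hφd : Differentiable ℝ φ := hφ.differentiable one_ne_zero
  have hgd : Differentiable ℝ g := hg1.differentiable one_ne_zero
  have hvd : Differentiable ℝ v := hv.differentiable (by norm_num)
  have hfv2 : ContDiff ℝ 2 (fderiv ℝ v) := hv.fderiv_right (by norm_num)
  have hfvd : Differentiable ℝ (fderiv ℝ v) := hfv2.differentiable two_ne_zero
  have hfv'cont : Continuous (fderiv ℝ (fderiv ℝ v)) := hfv2.continuous_fderiv two_ne_zero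
  -- cutoff function
  obtain ⟨r, hr⟩ := hsupp.isBounded.subset_ball (0 : EuclideanSpace ℝ (Fin 2))
  set R : ℝ := max r 1 with hRdef
  have hRpos : (0:ℝ) < R := lt_of_lt_of_le one_pos (le_max_right _ _)
  set b : ContDiffBump (0 : EuclideanSpace ℝ (Fin 2)) := ⟨R, R + 1, hRpos, by linarith⟩
  set χ : EuclideanSpace ℝ (Fin 2) → ℝ := fun x => b x with hχdef
  have hχ1 : ∀ x ∈ ball (0 : EuclideanSpace ℝ (Fin 2)) R, χ x = 1 := fun x hx =>
    b.one_of_mem_closedBall (ball_subset_closedBall hx)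
  have hKU : tsupport φ ⊆ ball (0 : EuclideanSpace ℝ (Fin 2)) R :=
    hr.trans (ball_subset_ball (le_max_left _ _))
  have hχsmooth : ContDiff ℝ 1 χ := b.contDiff
  have hχsupp : HasCompactSupport χ := b.hasCompactSupport
  -- tsupport g ⊆ ball 0 R
  have hgK : tsupport g ⊆ ball (0 : EuclideanSpace ℝ (Fin 2)) R := by
    refine Set.Subset.trans ?_ hKU
    apply closure_mono
    intro x hx
    simp only [Function.mem_support, hgdef] at hx ⊢
    intro h0; exact hx (by rw [h0, zero_mul])
  -- the cutoff multiplied first derivatives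
  have key : ∀ i : Fin 2,
      ∫ x, fderiv ℝ (fderiv ℝ v) x (ee i) (ee i) * g x
        = -∫ x, fderiv ℝ g x (ee i) * fderiv ℝ v x (ee i) := by
    intro i
    set f : EuclideanSpace ℝ (Fin 2) → ℝ := fun x => χ x * fderiv ℝ v x (ee i) with hfdef
    have hdvi : ContDiff ℝ 1 (fun x => fderiv ℝ v x (ee i)) :=
      (hfv2.of_le one_le_two).clm_apply contDiff_const
    have hf1 : ContDiff ℝ 1 f := hχsmooth.mul hdvi
    have hfsupp : HasCompactSupport f := hχsupp.mul_right
    obtain ⟨C, hfLip⟩ := ContDiff.lipschitzWith_of_hasCompactSupport hfsupp hf1 one_ne_zero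
    have ibp := LipschitzWith.integral_lineDeriv_mul_eq (μ := volume) hfLip hgLip hgsupp (ee i)
    have hL : ∀ x, lineDeriv ℝ f x (ee i) * g x
        = fderiv ℝ (fderiv ℝ v) x (ee i) (ee i) * g x := by
      intro x
      rcases eq_or_ne (g x) 0 with h0 | h0
      · rw [h0, mul_zero, mul_zero]
      · have hxU : x ∈ ball (0 : EuclideanSpace ℝ (Fin 2)) R :=
          hgK (subset_closure (by simpa [Function.mem_support] using h0))
        have hev : f =ᶠ[nhds x] fun y => fderiv ℝ v y (ee i) := by
          filter_upwards [isOpen_ball.mem_nhds hxU] with y hy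
          simp [hfdef, hχ1 y hy]
        rw [hev.lineDeriv_eq]
        have hld : lineDeriv ℝ (fun y => fderiv ℝ v y (ee i)) x (ee i)
            = fderiv ℝ (fun y => fderiv ℝ v y (ee i)) x (ee i) :=
          ((hdvi.differentiable one_ne_zero x).hasFDerivAt.hasLineDerivAt (ee i)).lineDeriv
        rw [hld, fderiv_clm_apply (hfvd x) (differentiableAt_const _)]
        simp
    have hR : ∀ x, lineDeriv ℝ g x (-(ee i)) * f x
        = -(fderiv ℝ g x (ee i) * fderiv ℝ v x (ee i)) := by
      intro x
      have hldg : lineDeriv ℝ g x (-(ee i)) = -(fderiv ℝ g x (ee i)) := by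
        rw [((hgd x).hasFDerivAt.hasLineDerivAt (-(ee i))).lineDeriv, map_neg]
      rcases eq_or_ne (fderiv ℝ g x (ee i)) 0 with h0 | h0
      · rw [hldg, h0]; ring
      · have hxs : x ∈ tsupport g := by
          apply support_fderiv_subset ℝ
          simp only [Function.mem_support]
          intro hc; exact h0 (by rw [hc]; rfl)
        have hxU := hgK hxs
        rw [hldg, hfdef]
        simp only [hχ1 x hxU, one_mul]
        ring
    calc ∫ x, fderiv ℝ (fderiv ℝ v) x (ee i) (ee i) * g x
        = ∫ x, lineDeriv ℝ f x (ee i) * g x := by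
          exact integral_congr_ae (Filter.Eventually.of_forall fun x => (hL x).symm)
      _ = ∫ x, lineDeriv ℝ g x (-(ee i)) * f x := ibp
      _ = ∫ x, -(fderiv ℝ g x (ee i) * fderiv ℝ v x (ee i)) := by
          exact integral_congr_ae (Filter.Eventually.of_forall fun x => hR x)
      _ = -∫ x, fderiv ℝ g x (ee i) * fderiv ℝ v x (ee i) := integral_neg _
  -- continuity of P
  have hPcont : Continuous P := by
    have : Continuous fun x => lap v x := by
      simp only [lap_eq]
      exact continuous_finset_sum _ fun i _ =>
        ((hfv'cont.clm_apply continuous_const).clm_apply continuous_const)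
    exact this.congr fun x => (hP x).symm
  -- integrability facts
  have hIP : Integrable (fun x => P x * φ x ^ 2) volume := by
    apply Continuous.integrable_of_hasCompactSupport
    · exact hPcont.mul (hφ.continuous.pow 2)
    · apply HasCompactSupport.mul_left
      exact hsupp.comp_left (g := fun t : ℝ => t ^ 2) (by simp)
  have hgradφcont : Continuous fun x => gradient φ x := by
    have : Continuous fun x => fderiv ℝ φ x := hφ.continuous_fderiv one_ne_zero
    exact ((InnerProductSpace.toDual ℝ _).symm.continuous).comp this
  have hgradφsupp : HasCompactSupport fun x => gradient φ x := by
    apply (hsupp.fderiv ℝ).comp_left (g := fun L => (InnerProductSpace.toDual ℝ _).symm L)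
    simp
  have hIB : Integrable (fun x => v x * ‖gradient φ x‖ ^ 2) volume := by
    apply Continuous.integrable_of_hasCompactSupport
    · exact (hv.continuous).mul ((hgradφcont.norm).pow 2)
    · apply HasCompactSupport.mul_left
      exact hgradφsupp.comp_left (g := fun w => ‖w‖ ^ 2) (by simp)
  have hI2 : ∀ i : Fin 2, Integrable (fun x => fderiv ℝ g x (ee i) * fderiv ℝ v x (ee i)) volume := by
    intro i
    apply Continuous.integrable_of_hasCompactSupport
    · exact ((hg1.continuous_fderiv one_ne_zero).clm_apply continuous_const).mul
        ((hfv2.continuous.clm_apply continuous_const))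
    · exact (hgsupp.fderiv_apply ℝ (ee i)).mul_right
  have hI1 : ∀ i : Fin 2, Integrable (fun x => fderiv ℝ (fderiv ℝ v) x (ee i) (ee i) * g x) volume := by
    intro i
    apply Continuous.integrable_of_hasCompactSupport
    · exact ((hfv'cont.clm_apply continuous_const).clm_apply continuous_const).mul hg1.continuous
    · exact hgsupp.mul_left
  -- main identity:  ∫ P φ² = -∫ ∑ᵢ ∂ᵢg ∂ᵢv
  have hmain : ∫ x, P x * φ x ^ 2
      = ∫ x, -∑ i, fderiv ℝ g x (ee i) * fderiv ℝ v x (ee i) := by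
    have e1 : ∀ x, P x * φ x ^ 2 = ∑ i, fderiv ℝ (fderiv ℝ v) x (ee i) (ee i) * g x := by
      intro x
      rw [hP x, lap_eq, Finset.sum_mul]
      congr 1
      ext i
      rw [hgdef]; ring
    calc ∫ x, P x * φ x ^ 2
        = ∫ x, ∑ i, fderiv ℝ (fderiv ℝ v) x (ee i) (ee i) * g x :=
          integral_congr_ae (Filter.Eventually.of_forall e1)
      _ = ∑ i, ∫ x, fderiv ℝ (fderiv ℝ v) x (ee i) (ee i) * g x :=
          integral_finset_sum _ fun i _ => hI1 i
      _ = ∑ i, -∫ x, fderiv ℝ g x (ee i) * fderiv ℝ v x (ee i) :=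
          Finset.sum_congr rfl fun i _ => key i
      _ = -∑ i, ∫ x, fderiv ℝ g x (ee i) * fderiv ℝ v x (ee i) := by
          rw [← Finset.sum_neg_distrib]
      _ = -∫ x, ∑ i, fderiv ℝ g x (ee i) * fderiv ℝ v x (ee i) := by
          rw [integral_finset_sum _ fun i _ => hI2 i]
      _ = ∫ x, -∑ i, fderiv ℝ g x (ee i) * fderiv ℝ v x (ee i) := (integral_neg _).symm
  -- pointwise estimate
  have hpt : ∀ x, -∑ i, fderiv ℝ g x (ee i) * fderiv ℝ v x (ee i)
      ≤ (1/2) * (P x * φ x ^ 2) + 2 * (v x * ‖gradient φ x‖ ^ 2) := by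
    intro x
    have hfg : ∀ i, fderiv ℝ g x (ee i) = 2 * φ x * fderiv ℝ φ x (ee i) := by
      intro i
      have : fderiv ℝ g x = φ x • fderiv ℝ φ x + φ x • fderiv ℝ φ x :=
        fderiv_mul (hφd x) (hφd x)
      rw [this]; simp; ring
    have hsum : ∑ i, fderiv ℝ g x (ee i) * fderiv ℝ v x (ee i)
        = 2 * φ x * @inner ℝ _ _ (gradient v x) (gradient φ x) := by
      rw [inner_grad_expand]
      rw [Finset.mul_sum]
      exact Finset.sum_congr rfl fun i _ => by rw [hfg i]; ring
    rw [hsum]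
    set I := @inner ℝ _ _ (gradient v x) (gradient φ x) with hI
    set na := ‖gradient v x‖
    set nb := ‖gradient φ x‖
    have hCS : |I| ≤ na * nb := abs_real_inner_le_norm _ _
    have heqx : v x * P x = na ^ 2 + 1/2 := by rw [hP x]; exact heq x
    have hw : 0 < v x := hvpos x
    have hna : 0 ≤ na := norm_nonneg _
    have hnb : 0 ≤ nb := norm_nonneg _
    set t := φ x
    have h1 : -(t * I) ≤ |t| * (na * nb) := by
      calc -(t * I) ≤ |t * I| := neg_le_abs _
        _ = |t| * |I| := abs_mul _ _
        _ ≤ |t| * (na * nb) := by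
            exact mul_le_mul_of_nonneg_left hCS (abs_nonneg t)
    have habs : |t| ^ 2 = t ^ 2 := sq_abs t
    nlinarith [sq_nonneg (|t| * na - 2 * v x * nb), abs_nonneg t, mul_pos hw hw,
      mul_le_mul_of_nonneg_left h1 (le_of_lt hw), sq_nonneg t]
  -- put together
  have hmono : ∫ x, P x * φ x ^ 2
      ≤ (1/2) * (∫ x, P x * φ x ^ 2) + 2 * ∫ x, v x * ‖gradient φ x‖ ^ 2 := by
    have hIsum : Integrable (fun x => -∑ i, fderiv ℝ g x (ee i) * fderiv ℝ v x (ee i)) volume :=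
      (integrable_finset_sum _ fun i _ => hI2 i).neg
    have hIrhs : Integrable
        (fun x => (1/2) * (P x * φ x ^ 2) + 2 * (v x * ‖gradient φ x‖ ^ 2)) volume :=
      (hIP.const_mul _).add (hIB.const_mul _)
    calc ∫ x, P x * φ x ^ 2
        = ∫ x, -∑ i, fderiv ℝ g x (ee i) * fderiv ℝ v x (ee i) := hmain
      _ ≤ ∫ x, ((1/2) * (P x * φ x ^ 2) + 2 * (v x * ‖gradient φ x‖ ^ 2)) :=
          integral_mono hIsum hIrhs hpt
      _ = (1/2) * (∫ x, P x * φ x ^ 2) + 2 * ∫ x, v x * ‖gradient φ x‖ ^ 2 := by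
          rw [integral_add (hIP.const_mul _) (hIB.const_mul _),
            integral_const_mul, integral_const_mul]
  linarith
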